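/- Let E be a finite-dimensional real inner product space, let M : E →ₗ[ℝ] E be self-adjoint and positive semidefinite, and let V be a subspace of E with (ker M) ⊓ V = ⊥, so that N := M ∘ P_V + P_{V⊥} is bijective; define the Bott–Duffin inverse A := P_V ∘ N⁻¹. Then A is self-adjoint and positive semidefinite: ⟪A x, y⟫ = ⟪x, A y⟫ and ⟪A x, x⟫ ≥ 0 for all x, y ∈ E. -/

import Mathlib

open RealInnerProductSpace

/-- The orthogonal projection onto a subspace, as a linear endomorphism. -/
noncomputable def orthProj {E : Type*} [NormedAddCommGroup E] [InnerProductSpace ℝ E]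
    [FiniteDimensional ℝ E] (V : Submodule ℝ E) : E →ₗ[ℝ] E :=
  (V.subtypeL.comp (V.orthogonalProjectionOnto)).toLinearMap

theorem bott_duffin_selfAdjoint_posSemidef
    {E : Type*} [NormedAddCommGroup E] [InnerProductSpace ℝ E] [FiniteDimensional ℝ E]
    (M : E →ₗ[ℝ] E)
    (hMsym : ∀ x y : E, ⟪M x, y⟫ = ⟪x, M y⟫)
    (hMpsd : ∀ x : E, 0 ≤ ⟪M x, x⟫)
    (V : Submodule ℝ E)
    (hker : LinearMap.ker M ⊓ V = ⊥)
    (N : E →ₗ[ℝ] E) (hN : N = M ∘ₗ orthProj V + orthProj Vᗮ)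
    (hNbij : Function.Bijective N)
    (A : E →ₗ[ℝ] E)
    (hA : A = orthProj V ∘ₗ (LinearEquiv.ofBijective N hNbij).symm.toLinearMap) :
    (∀ x y : E, ⟪A x, y⟫ = ⟪x, A y⟫) ∧ ∀ x : E, 0 ≤ ⟪A x, x⟫ := by
  set S := (LinearEquiv.ofBijective N hNbij).symm with hS
  have hNS : ∀ x : E, N (S x) = x := fun x =>
    (LinearEquiv.ofBijective N hNbij).apply_symm_apply x
  have hPV : ∀ u : E, orthProj V u ∈ V := fun u => (V.orthogonalProjectionOnto u).2
  have hPVp : ∀ u : E, orthProj Vᗮ u ∈ Vᗮ := fun u => (Vᗮ.orthogonalProjectionOnto u).2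
  have horth : ∀ u v : E, ⟪orthProj V u, orthProj Vᗮ v⟫ = 0 := fun u v =>
    (hPVp v) _ (hPV u)
  have hAx : ∀ x : E, A x = orthProj V (S x) := fun x => by rw [hA]; rfl
  have hx : ∀ x : E, x = M (orthProj V (S x)) + orthProj Vᗮ (S x) := by
    intro x
    conv_lhs => rw [← hNS x]
    rw [hN]; rfl
  have key : ∀ x y : E, ⟪A x, y⟫ = ⟪M (orthProj V (S x)), orthProj V (S y)⟫ := by
    intro x y
    rw [hAx]
    conv_lhs => rw [hx y]
    rw [inner_add_right, horth, add_zero, real_inner_comm, hMsym, real_inner_comm]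
  constructor
  · intro x y
    rw [key x y]
    conv_rhs => rw [hx x, hAx y]
    rw [inner_add_left]
    have := horth (S y) (S x)
    rw [real_inner_comm] at this
    rw [this, add_zero]
  · intro x
    rw [key x x]
    exact hMpsd _
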